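/- The space 𝔉 of Fueter maps on ℝ⁴ is equal to the internal direct sum ℍ_l ⊕ (ℍ_l ∘ I₁) ⊕ (ℍ_l ∘ I₂); in particular 𝔉 is a 12-dimensional real subspace of End(ℝ⁴). -/

import Mathlib

/- STATEMENT 1: The space 𝔉 of Fueter maps on ℝ⁴ ≅ ℍ equals the internal direct
sum ℍ_l ⊕ (ℍ_l ∘ I₁) ⊕ (ℍ_l ∘ I₂); in particular 𝔉 is a 12-dimensional real
subspace of End(ℝ⁴). -/

open Quaternion

noncomputable section
set_option maxHeartbeats 1000000

/-- e₁ = −i. -/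
def e1 : ℍ[ℝ] := ⟨0, -1, 0, 0⟩
/-- e₂ = −j. -/
def e2 : ℍ[ℝ] := ⟨0, 0, -1, 0⟩
/-- e₃ = −k. -/
def e3 : ℍ[ℝ] := ⟨0, 0, 0, -1⟩

/-- The subspace 𝔉 of Fueter maps: endomorphisms `L` of ℝ⁴ ≅ ℍ satisfying
`L + I₁ L I₁ + I₂ L I₂ − I₃ L I₃ = 0`, where `Iₖ` is right multiplication
by `eₖ`. -/
def fueterSubmodule : Submodule ℝ (ℍ[ℝ] →ₗ[ℝ] ℍ[ℝ]) where
  carrier := {L | ∀ u : ℍ[ℝ],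
    L u + L (u * e1) * e1 + L (u * e2) * e2 - L (u * e3) * e3 = 0}
  add_mem' := by
    intro a b ha hb u
    have h := congrArg₂ (· + ·) (ha u) (hb u)
    simp only [add_zero] at h
    simp only [LinearMap.add_apply, add_mul]
    abel_nf at h ⊢
    exact h
  zero_mem' := by
    intro u
    simp
  smul_mem' := by
    intro c a ha u
    have h := ha u
    simp only [LinearMap.smul_apply, smul_mul_assoc, ← smul_add, ← smul_sub]
    rw [h, smul_zero]

/-- 𝔉 = ℍ_l ⊕ (ℍ_l ∘ I₁) ⊕ (ℍ_l ∘ I₂): every Fueter map decomposes uniquely as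
`u ↦ q₀·u + q₁·(u·e₁) + q₂·(u·e₂)` with `q₀, q₁, q₂ ∈ ℍ`, and conversely every
such map is Fueter; moreover 𝔉 has real dimension 12. -/
@[simp] lemma e1_re : e1.re = 0 := rfl
@[simp] lemma e1_imI : e1.imI = -1 := rfl
@[simp] lemma e1_imJ : e1.imJ = 0 := rfl
@[simp] lemma e1_imK : e1.imK = 0 := rfl
@[simp] lemma e2_re : e2.re = 0 := rfl
@[simp] lemma e2_imI : e2.imI = 0 := rfl
@[simp] lemma e2_imJ : e2.imJ = -1 := rfl
@[simp] lemma e2_imK : e2.imK = 0 := rfl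
@[simp] lemma e3_re : e3.re = 0 := rfl
@[simp] lemma e3_imI : e3.imI = 0 := rfl
@[simp] lemma e3_imJ : e3.imJ = 0 := rfl
@[simp] lemma e3_imK : e3.imK = -1 := rfl

lemma mem_fueter_iff (L : ℍ[ℝ] →ₗ[ℝ] ℍ[ℝ]) : L ∈ fueterSubmodule ↔
    ∀ u : ℍ[ℝ], L u + L (u * e1) * e1 + L (u * e2) * e2 - L (u * e3) * e3 = 0 :=
  Iff.rfl

lemma rep_fueter (q0 q1 q2 u : ℍ[ℝ]) :
    (q0*u + q1*(u*e1) + q2*(u*e2))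
    + (q0*(u*e1) + q1*((u*e1)*e1) + q2*((u*e1)*e2))*e1
    + (q0*(u*e2) + q1*((u*e2)*e1) + q2*((u*e2)*e2))*e2
    - (q0*(u*e3) + q1*((u*e3)*e1) + q2*((u*e3)*e2))*e3 = 0 := by
  ext <;> simp only [e1_re, e1_imI, e1_imJ, e1_imK, e2_re, e2_imI, e2_imJ, e2_imK, e3_re, e3_imI, e3_imJ, e3_imK, Quaternion.re_add, Quaternion.imI_add, Quaternion.imJ_add, Quaternion.imK_add, Quaternion.re_sub, Quaternion.imI_sub, Quaternion.imJ_sub, Quaternion.imK_sub, Quaternion.re_neg, Quaternion.imI_neg, Quaternion.imJ_neg, Quaternion.imK_neg, Quaternion.re_mul, Quaternion.imI_mul, Quaternion.imJ_mul, Quaternion.imK_mul, Quaternion.re_smul, Quaternion.imI_smul, Quaternion.imJ_smul, Quaternion.imK_smul, Quaternion.re_zero, Quaternion.imI_zero, Quaternion.imJ_zero, Quaternion.imK_zero, smul_eq_mul] <;> ring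

def q0L (L : ℍ[ℝ] →ₗ[ℝ] ℍ[ℝ]) : ℍ[ℝ] :=
  (4:ℝ)⁻¹ • (L 1 - L e1*e1 - L e2*e2 - (-(L 1 + L e1*e1 + L e2*e2)*e3)*e3)
def q1L (L : ℍ[ℝ] →ₗ[ℝ] ℍ[ℝ]) : ℍ[ℝ] :=
  -((4:ℝ)⁻¹ • (L 1 - L e1*e1 + L e2*e2 + (-(L 1 + L e1*e1 + L e2*e2)*e3)*e3)) * e1
def q2L (L : ℍ[ℝ] →ₗ[ℝ] ℍ[ℝ]) : ℍ[ℝ] :=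
  -((4:ℝ)⁻¹ • (L 1 + L e1*e1 - L e2*e2 + (-(L 1 + L e1*e1 + L e2*e2)*e3)*e3)) * e2

lemma rep_exists (v0 v1 v2 u : ℍ[ℝ]) :
    u.re • v0 - u.imI • v1 - u.imJ • v2 - u.imK • (-(v0 + v1*e1 + v2*e2)*e3) =
    ((4:ℝ)⁻¹ • (v0 - v1*e1 - v2*e2 - (-(v0 + v1*e1 + v2*e2)*e3)*e3)) * u
    + (-((4:ℝ)⁻¹ • (v0 - v1*e1 + v2*e2 + (-(v0 + v1*e1 + v2*e2)*e3)*e3)) * e1) * (u*e1)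
    + (-((4:ℝ)⁻¹ • (v0 + v1*e1 - v2*e2 + (-(v0 + v1*e1 + v2*e2)*e3)*e3)) * e2) * (u*e2) := by
  ext <;> simp only [e1_re, e1_imI, e1_imJ, e1_imK, e2_re, e2_imI, e2_imJ, e2_imK, e3_re, e3_imI, e3_imJ, e3_imK, Quaternion.re_add, Quaternion.imI_add, Quaternion.imJ_add, Quaternion.imK_add, Quaternion.re_sub, Quaternion.imI_sub, Quaternion.imJ_sub, Quaternion.imK_sub, Quaternion.re_neg, Quaternion.imI_neg, Quaternion.imJ_neg, Quaternion.imK_neg, Quaternion.re_mul, Quaternion.imI_mul, Quaternion.imJ_mul, Quaternion.imK_mul, Quaternion.re_smul, Quaternion.imI_smul, Quaternion.imJ_smul, Quaternion.imK_smul, smul_eq_mul] <;> ring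

lemma rep_unique (p q r p' q' r' : ℍ[ℝ])
    (h : ∀ u : ℍ[ℝ], p*u + q*(u*e1) + r*(u*e2) = p'*u + q'*(u*e1) + r'*(u*e2)) :
    p = p' ∧ q = q' ∧ r = r' := by
  have h1 := h 1
  have h2 := h e1
  have h3 := h e2
  simp only [one_mul, Quaternion.ext_iff, e1_re, e1_imI, e1_imJ, e1_imK, e2_re, e2_imI, e2_imJ, e2_imK, e3_re, e3_imI, e3_imJ, e3_imK, Quaternion.re_add, Quaternion.imI_add, Quaternion.imJ_add, Quaternion.imK_add, Quaternion.re_mul, Quaternion.imI_mul, Quaternion.imJ_mul, Quaternion.imK_mul, Quaternion.re_one, Quaternion.imI_one, Quaternion.imJ_one, Quaternion.imK_one] at h1 h2 h3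
  obtain ⟨a1, a2, a3, a4⟩ := h1
  obtain ⟨b1, b2, b3, b4⟩ := h2
  obtain ⟨c1, c2, c3, c4⟩ := h3
  refine ⟨?_, ?_, ?_⟩ <;> rw [Quaternion.ext_iff] <;>
    refine ⟨?_, ?_, ?_, ?_⟩ <;> linarith

lemma hrep_of_mem (L : ℍ[ℝ] →ₗ[ℝ] ℍ[ℝ])
    (hL : ∀ u : ℍ[ℝ], L u + L (u * e1) * e1 + L (u * e2) * e2 - L (u * e3) * e3 = 0) :
    ∀ u : ℍ[ℝ], L u = q0L L * u + q1L L * (u * e1) + q2L L * (u * e2) := by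
  have h0 := hL 1
  simp only [one_mul] at h0
  have he33 : e3 * e3 = -1 := by ext <;> simp [Quaternion.re_mul, Quaternion.imI_mul, Quaternion.imJ_mul, Quaternion.imK_mul]
  have h1 := sub_eq_zero.mp h0
  have hv3 : L e3 = -(L 1 + L e1 * e1 + L e2 * e2) * e3 := by
    rw [h1, neg_mul, mul_assoc, he33, mul_neg_one, neg_neg]
  intro u
  have hu : L u = u.re • L 1 - u.imI • L e1 - u.imJ • L e2 - u.imK • L e3 := by
    conv_lhs => rw [show u = u.re • (1:ℍ[ℝ]) - u.imI • e1 - u.imJ • e2 - u.imK • e3 from by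
      ext <;> simp [Quaternion.re_mul, Quaternion.imI_mul, Quaternion.imJ_mul, Quaternion.imK_mul]]
    simp only [map_sub, map_smul]
  rw [hu, hv3, q0L, q1L, q2L]
  exact rep_exists (L 1) (L e1) (L e2) u

lemma main_iff (L : ℍ[ℝ] →ₗ[ℝ] ℍ[ℝ]) : L ∈ fueterSubmodule ↔
      ∃! t : ℍ[ℝ] × ℍ[ℝ] × ℍ[ℝ], ∀ u : ℍ[ℝ],
        L u = t.1 * u + t.2.1 * (u * e1) + t.2.2 * (u * e2) := by
  rw [mem_fueter_iff]
  constructor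
  · intro hL
    have hrep := hrep_of_mem L hL
    refine ⟨(q0L L, q1L L, q2L L), hrep, ?_⟩
    rintro ⟨y0, y1, y2⟩ hy
    obtain ⟨z0, z1, z2⟩ :=
      rep_unique y0 y1 y2 (q0L L) (q1L L) (q2L L) (fun u => (hy u).symm.trans (hrep u))
    simp only [Prod.mk.injEq]
    exact ⟨z0, z1, z2⟩
  · rintro ⟨t, ht, -⟩
    intro u
    rw [ht u, ht (u*e1), ht (u*e2), ht (u*e3)]
    exact rep_fueter t.1 t.2.1 t.2.2 u

def Phi : ℍ[ℝ] × ℍ[ℝ] × ℍ[ℝ] →ₗ[ℝ] (ℍ[ℝ] →ₗ[ℝ] ℍ[ℝ]) where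
  toFun t :=
    { toFun := fun u => t.1*u + t.2.1*(u*e1) + t.2.2*(u*e2)
      map_add' := by intro x y; simp only [mul_add, add_mul]; abel
      map_smul' := by intro c x; simp [mul_smul_comm, smul_mul_assoc, smul_add] }
  map_add' := by
    intro s t
    apply LinearMap.ext; intro u
    show (s+t).1*u + (s+t).2.1*(u*e1) + (s+t).2.2*(u*e2) =
      (s.1*u + s.2.1*(u*e1) + s.2.2*(u*e2)) + (t.1*u + t.2.1*(u*e1) + t.2.2*(u*e2))
    simp only [Prod.fst_add, Prod.snd_add, add_mul]
    abel
  map_smul' := by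
    intro c t
    apply LinearMap.ext; intro u
    show (c • t).1*u + (c • t).2.1*(u*e1) + (c • t).2.2*(u*e2) =
      c • (t.1*u + t.2.1*(u*e1) + t.2.2*(u*e2))
    simp only [Prod.smul_fst, Prod.smul_snd, smul_mul_assoc, smul_add]

lemma phi_apply (t : ℍ[ℝ] × ℍ[ℝ] × ℍ[ℝ]) (u : ℍ[ℝ]) :
    Phi t u = t.1*u + t.2.1*(u*e1) + t.2.2*(u*e2) := rfl

lemma phi_inj : Function.Injective Phi := by
  intro s t h
  obtain ⟨z0, z1, z2⟩ := rep_unique s.1 s.2.1 s.2.2 t.1 t.2.1 t.2.2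
    (fun u => by rw [← phi_apply, ← phi_apply, h])
  exact Prod.ext z0 (Prod.ext z1 z2)

lemma range_phi : LinearMap.range Phi = fueterSubmodule := by
  ext L
  simp only [LinearMap.mem_range]
  constructor
  · rintro ⟨t, rfl⟩
    rw [mem_fueter_iff]
    intro u
    simp only [phi_apply]
    exact rep_fueter t.1 t.2.1 t.2.2 u
  · intro hL
    refine ⟨(q0L L, q1L L, q2L L), ?_⟩
    apply LinearMap.ext; intro u
    rw [phi_apply]
    exact (hrep_of_mem L ((mem_fueter_iff L).mp hL) u).symm

lemma dim12 : Module.finrank ℝ fueterSubmodule = 12 := by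
  rw [← range_phi, LinearMap.finrank_range_of_inj phi_inj, Module.finrank_prod,
    Module.finrank_prod, Quaternion.finrank_eq_four]

theorem fueter_eq_directSum_and_finrank_eq_twelve :
    (∀ L : ℍ[ℝ] →ₗ[ℝ] ℍ[ℝ], L ∈ fueterSubmodule ↔
      ∃! t : ℍ[ℝ] × ℍ[ℝ] × ℍ[ℝ], ∀ u : ℍ[ℝ],
        L u = t.1 * u + t.2.1 * (u * e1) + t.2.2 * (u * e2)) ∧
    Module.finrank ℝ fueterSubmodule = 12 := ⟨main_iff, dim12⟩
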